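/- Let D be a nonzero integer with D ≡ 0 or 1 mod 4, written uniquely as D = d·ℓ² with d a fundamental discriminant and ℓ > 0. Define ψ_D(n) = (d | n/gcd(n,ℓ)) using the Kronecker symbol. Then for Re(z) > 1, the Dirichlet series L(z, ψ_D) = Σ_{n≥1} ψ_D(n) n^{-z} satisfies L(z, ψ_D) = L(z, ψ_d) · ∏_{p | ℓ} [1 + (1 - ψ_d(p)) · Σ_{j=1}^{ord_p ℓ} p^{-jz}]. -/

import Mathlib

/-- A fundamental discriminant. -/
def IsFundamentalDiscriminant (d : ℤ) : Prop :=
  (d % 4 = 1 ∧ Squarefree d ∧ d ≠ 1) ∨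
    (d % 4 = 0 ∧ Squarefree (d / 4) ∧ (d / 4) % 4 ≠ 1)

/-- The Kronecker symbol `(d | p)` at a prime `p`. -/
noncomputable def kroneckerAtPrime (d : ℤ) (p : ℕ) : ℤ :=
  if p = 2 then
    (if d % 8 = 1 ∨ d % 8 = 7 then 1 else if d % 8 = 3 ∨ d % 8 = 5 then -1 else 0)
  else if h : p.Prime then @legendreSym p ⟨h⟩ d else 0

/-- The Kronecker symbol `(d | n)` for `n ≥ 1`, extended completely multiplicatively
from its values at primes. -/
noncomputable def kronecker (d : ℤ) (n : ℕ) : ℤ :=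
  n.factorization.prod fun p k => (kroneckerAtPrime d p) ^ k

open Finset ArithmeticFunction LSeries.notation
open scoped ArithmeticFunction.zeta

section KroneckerLemmas

lemma kronecker_one' (d : ℤ) : kronecker d 1 = 1 := by
  simp [kronecker]

lemma kronecker_mul' (d : ℤ) {m n : ℕ} (hm : m ≠ 0) (hn : n ≠ 0) :
    kronecker d (m * n) = kronecker d m * kronecker d n := by
  unfold kronecker
  rw [Nat.factorization_mul hm hn]
  exact Finsupp.prod_add_index' (fun p => pow_zero _) (fun p k₁ k₂ => pow_add _ k₁ k₂)

lemma kronecker_prime_pow (d : ℤ) {p : ℕ} (hp : p.Prime) (k : ℕ) :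
    kronecker d (p ^ k) = (kronecker d p) ^ k := by
  have h : ∀ j : ℕ, kronecker d (p ^ j) = kroneckerAtPrime d p ^ j := by
    intro j
    unfold kronecker
    rw [hp.factorization_pow]
    exact Finsupp.prod_single_index (pow_zero _)
  have h1 : kronecker d p = kroneckerAtPrime d p := by
    have := h 1; simpa using this
  rw [h k, h1]

lemma kroneckerAtPrime_abs_le (d : ℤ) (p : ℕ) : |kroneckerAtPrime d p| ≤ 1 := by
  unfold kroneckerAtPrime
  split_ifs with h1 h2 h3 h4
  · norm_num
  · norm_num
  · norm_num
  · haveI := Fact.mk h4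
    rcases eq_or_ne ((d : ZMod p)) 0 with h0 | h0
    · rw [(legendreSym.eq_zero_iff p d).mpr h0]; norm_num
    · rcases legendreSym.eq_one_or_neg_one p h0 with h | h <;> rw [h] <;> norm_num
  · norm_num

lemma kronecker_abs_le (d : ℤ) (n : ℕ) : |kronecker d n| ≤ 1 := by
  unfold kronecker
  rw [Finsupp.prod, Finset.abs_prod]
  apply Finset.prod_le_one
  · intro i _; positivity
  · intro i _
    rw [abs_pow]
    exact pow_le_one₀ (abs_nonneg _) (kroneckerAtPrime_abs_le d i)

end KroneckerLemmas

section AuxFunctions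

/-- `ψ_d` as an arithmetic function. -/
noncomputable def psiA (d : ℤ) : ArithmeticFunction ℂ :=
  ⟨fun n => if n = 0 then 0 else (kronecker d n : ℂ), by simp⟩

/-- The finitely supported multiplicative correction factor. -/
noncomputable def gA (d : ℤ) (ℓ : ℕ) : ArithmeticFunction ℂ :=
  ⟨fun n => if n ≠ 0 ∧ n ∣ ℓ then ∏ p ∈ n.primeFactors, (1 - (kronecker d p : ℂ)) else 0,
   by simp⟩

/-- `ψ_D` as an arithmetic function. -/
noncomputable def fA (d : ℤ) (ℓ : ℕ) : ArithmeticFunction ℂ :=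
  ⟨fun n => if n = 0 then 0 else (kronecker d (n / n.gcd ℓ) : ℂ), by simp⟩

lemma psiA_apply (d : ℤ) {n : ℕ} (hn : n ≠ 0) : psiA d n = (kronecker d n : ℂ) := by
  simp [psiA, hn]

lemma gA_apply_dvd (d : ℤ) {ℓ n : ℕ} (hn : n ≠ 0) (h : n ∣ ℓ) :
    gA d ℓ n = ∏ p ∈ n.primeFactors, (1 - (kronecker d p : ℂ)) := by
  simp [gA, hn, h]

lemma gA_apply_not_dvd (d : ℤ) {ℓ n : ℕ} (h : ¬ n ∣ ℓ) : gA d ℓ n = 0 := by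
  simp [gA, h]

lemma fA_apply (d : ℤ) (ℓ : ℕ) {n : ℕ} (hn : n ≠ 0) :
    fA d ℓ n = (kronecker d (n / n.gcd ℓ) : ℂ) := by simp [fA, hn]

lemma psiA_mult (d : ℤ) : (psiA d).IsMultiplicative := by
  rw [ArithmeticFunction.IsMultiplicative.iff_ne_zero]
  refine ⟨by rw [psiA_apply d one_ne_zero, kronecker_one']; norm_num,
    fun {m n} hm hn _ => ?_⟩
  rw [psiA_apply d (mul_ne_zero hm hn), psiA_apply d hm, psiA_apply d hn,
    kronecker_mul' d hm hn]
  push_cast; ring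

lemma gA_mult (d : ℤ) (ℓ : ℕ) : (gA d ℓ).IsMultiplicative := by
  rw [ArithmeticFunction.IsMultiplicative.iff_ne_zero]
  constructor
  · simp [gA]
  · intro m n hm hn hmn
    by_cases h : m * n ∣ ℓ
    · have hmℓ : m ∣ ℓ := (dvd_mul_right m n).trans h
      have hnℓ : n ∣ ℓ := (dvd_mul_left n m).trans h
      rw [gA_apply_dvd d (mul_ne_zero hm hn) h, gA_apply_dvd d hm hmℓ, gA_apply_dvd d hn hnℓ,
        Nat.primeFactors_mul hm hn, Finset.prod_union hmn.disjoint_primeFactors]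
    · rw [gA_apply_not_dvd d h]
      by_cases hm' : m ∣ ℓ
      · have hn' : ¬ n ∣ ℓ := fun hn' => h (hmn.mul_dvd_of_dvd_of_dvd hm' hn')
        rw [gA_apply_not_dvd d hn', mul_zero]
      · rw [gA_apply_not_dvd d hm', zero_mul]

lemma coprime_gcd_mul {m n : ℕ} (ℓ : ℕ) (h : Nat.Coprime m n) :
    (m * n).gcd ℓ = m.gcd ℓ * n.gcd ℓ := by
  apply Nat.dvd_antisymm
  · have h1 : ((m * n).gcd ℓ).gcd m ∣ m.gcd ℓ :=
      Nat.dvd_gcd (Nat.gcd_dvd_right _ _) ((Nat.gcd_dvd_left _ _).trans (Nat.gcd_dvd_right _ _))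
    have h2 : ((m * n).gcd ℓ).gcd n ∣ n.gcd ℓ :=
      Nat.dvd_gcd (Nat.gcd_dvd_right _ _) ((Nat.gcd_dvd_left _ _).trans (Nat.gcd_dvd_right _ _))
    exact (Nat.dvd_gcd_mul_gcd_iff_dvd_mul.mpr (Nat.gcd_dvd_left _ _)).trans
      (mul_dvd_mul h1 h2)
  · refine Nat.dvd_gcd (mul_dvd_mul (Nat.gcd_dvd_left _ _) (Nat.gcd_dvd_left _ _)) ?_
    exact ((h.coprime_dvd_left (Nat.gcd_dvd_left m ℓ)).coprime_dvd_right
      (Nat.gcd_dvd_left n ℓ)).mul_dvd_of_dvd_of_dvd (Nat.gcd_dvd_right m ℓ)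
      (Nat.gcd_dvd_right n ℓ)

lemma fA_mult (d : ℤ) (ℓ : ℕ) : (fA d ℓ).IsMultiplicative := by
  rw [ArithmeticFunction.IsMultiplicative.iff_ne_zero]
  constructor
  · rw [fA_apply d ℓ one_ne_zero]
    simp [Nat.gcd_one_left, kronecker_one']
  · intro m n hm hn hmn
    have hgm : 0 < m.gcd ℓ := Nat.gcd_pos_of_pos_left ℓ (Nat.pos_of_ne_zero hm)
    have hgn : 0 < n.gcd ℓ := Nat.gcd_pos_of_pos_left ℓ (Nat.pos_of_ne_zero hn)
    have h1 : m / m.gcd ℓ ≠ 0 :=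
      (Nat.div_pos (Nat.le_of_dvd (Nat.pos_of_ne_zero hm) (Nat.gcd_dvd_left m ℓ)) hgm).ne'
    have h2 : n / n.gcd ℓ ≠ 0 :=
      (Nat.div_pos (Nat.le_of_dvd (Nat.pos_of_ne_zero hn) (Nat.gcd_dvd_left n ℓ)) hgn).ne'
    have key : m * n / (m * n).gcd ℓ = m / m.gcd ℓ * (n / n.gcd ℓ) := by
      rw [coprime_gcd_mul ℓ hmn,
        Nat.div_mul_div_comm (Nat.gcd_dvd_left m ℓ) (Nat.gcd_dvd_left n ℓ)]
    rw [fA_apply d ℓ (mul_ne_zero hm hn), fA_apply d ℓ hm, fA_apply d ℓ hn, key,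
      kronecker_mul' d h1 h2]
    push_cast; ring

lemma gcd_prime_pow {p ℓ : ℕ} (hp : p.Prime) (hℓ : ℓ ≠ 0) (k : ℕ) :
    (p ^ k).gcd ℓ = p ^ min k (ℓ.factorization p) := by
  obtain ⟨i, hik, hi⟩ := (Nat.dvd_prime_pow hp).mp (Nat.gcd_dvd_left (p ^ k) ℓ)
  have hfac := Nat.factorization_gcd (pow_ne_zero k hp.pos.ne') hℓ
  have hmin : ((p ^ k).gcd ℓ).factorization p = min k (ℓ.factorization p) := by
    rw [hfac]
    simp [hp.factorization_pow]
  rw [hi] at hmin ⊢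
  rw [hp.factorization_pow] at hmin
  simp only [Finsupp.single_eq_same] at hmin
  rw [hmin]

lemma telescope_aux (c : ℂ) : ∀ k m : ℕ, m ≤ k →
    c ^ k + ∑ j ∈ Finset.Icc 1 m, (1 - c) * c ^ (k - j) = c ^ (k - m) := by
  intro k m
  induction m with
  | zero => simp
  | succ m ih =>
    intro hmk
    rw [Finset.sum_Icc_succ_top (by omega : 1 ≤ m + 1), ← add_assoc, ih (by omega)]
    have h1 : k - m = (k - (m + 1)) + 1 := by omega
    rw [h1, pow_succ]
    ring

lemma fA_eq (d : ℤ) {ℓ : ℕ} (hℓ : ℓ ≠ 0) : fA d ℓ = psiA d * gA d ℓ := by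
  rw [ArithmeticFunction.IsMultiplicative.eq_iff_eq_on_prime_powers _ (fA_mult d ℓ) _
    ((psiA_mult d).mul (gA_mult d ℓ))]
  intro p k hp
  have hp0 : p ≠ 0 := hp.pos.ne'
  set e := ℓ.factorization p with he
  set c := (kronecker d p : ℂ) with hc
  have hL : fA d ℓ (p ^ k) = c ^ (k - min k e) := by
    rw [fA_apply d ℓ (pow_ne_zero k hp0), gcd_prime_pow hp hℓ k, ← he,
      Nat.pow_div (min_le_left k e) hp.pos, kronecker_prime_pow d hp]
    push_cast
    rfl
  rw [hL, ArithmeticFunction.mul_apply,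
    Nat.sum_divisorsAntidiagonal' (f := fun a b => psiA d a * gA d ℓ b),
    Nat.sum_divisors_prime_pow hp]
  have hstep : ∀ j ∈ Finset.range (k + 1),
      psiA d (p ^ k / p ^ j) * gA d ℓ (p ^ j) =
        (if j ≤ e then (if j = 0 then (1 : ℂ) else 1 - c) else 0) * c ^ (k - j) := by
    intro j hj
    have hjk : j ≤ k := by simpa [Nat.lt_succ_iff] using hj
    have hdiv : p ^ k / p ^ j = p ^ (k - j) := Nat.pow_div hjk hp.pos
    have hpsi : psiA d (p ^ k / p ^ j) = c ^ (k - j) := by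
      rw [hdiv, psiA_apply d (pow_ne_zero _ hp0), kronecker_prime_pow d hp]
      push_cast; rfl
    have hg : gA d ℓ (p ^ j) = if j ≤ e then (if j = 0 then (1 : ℂ) else 1 - c) else 0 := by
      by_cases hje : j ≤ e
      · have hpj : p ^ j ∣ ℓ := (Nat.Prime.pow_dvd_iff_le_factorization hp hℓ).mpr hje
        rw [gA_apply_dvd d (pow_ne_zero _ hp0) hpj]
        rcases eq_or_ne j 0 with rfl | hj0
        · simp [hje]
        · rw [Nat.primeFactors_pow p hj0, hp.primeFactors, Finset.prod_singleton]
          simp [hje, hj0, hc]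
      · have hpj : ¬ p ^ j ∣ ℓ := fun hdvd =>
          hje ((Nat.Prime.pow_dvd_iff_le_factorization hp hℓ).mp hdvd)
        rw [gA_apply_not_dvd d hpj]
        simp [hje]
    rw [hpsi, hg]
    ring
  rw [Finset.sum_congr rfl hstep]
  have hsplit : Finset.range (k + 1) = insert 0 (Finset.Icc 1 k) := by
    ext x; simp [Nat.lt_succ_iff]; omega
  rw [hsplit, Finset.sum_insert (by simp)]
  simp only [Nat.zero_le, if_true, if_pos rfl, one_mul, Nat.sub_zero]
  have hrest : ∑ j ∈ Finset.Icc 1 k,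
      (if j ≤ e then (if j = 0 then (1 : ℂ) else 1 - c) else 0) * c ^ (k - j) =
      ∑ j ∈ Finset.Icc 1 (min k e), (1 - c) * c ^ (k - j) := by
    have h1 : ∀ j ∈ Finset.Icc 1 k,
        (if j ≤ e then (if j = 0 then (1 : ℂ) else 1 - c) else 0) * c ^ (k - j) =
        if j ≤ e then (1 - c) * c ^ (k - j) else 0 := by
      intro j hj
      have hj0 : j ≠ 0 := by simp only [Finset.mem_Icc] at hj; omega
      by_cases hje : j ≤ e <;> simp [hje, hj0]
    rw [Finset.sum_congr rfl h1, ← Finset.sum_filter]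
    apply Finset.sum_congr
    · ext x
      simp only [Finset.mem_filter, Finset.mem_Icc, le_min_iff]
      omega
    · intros; rfl
  rw [hrest]
  exact (telescope_aux c k (min k e) (min_le_left k e)).symm

lemma psiA_summable (d : ℤ) {z : ℂ} (hz : 1 < z.re) : LSeriesSummable ↗(psiA d) z := by
  apply LSeriesSummable_of_bounded_of_one_lt_re (m := 1) _ hz
  intro n hn
  rw [psiA_apply d hn, Complex.norm_intCast]
  exact_mod_cast kronecker_abs_le d n

lemma gA_summable (d : ℤ) {ℓ : ℕ} (hℓ : ℓ ≠ 0) (z : ℂ) : LSeriesSummable ↗(gA d ℓ) z := by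
  apply summable_of_ne_finset_zero (s := ℓ.divisors)
  intro n hn
  rcases eq_or_ne n 0 with rfl | h0
  · exact LSeries.term_zero _ _
  · rw [LSeries.term_of_ne_zero h0,
      gA_apply_not_dvd d (fun hdvd => hn (Nat.mem_divisors.mpr ⟨hdvd, hℓ⟩)), zero_div]

lemma gA_LSeries (d : ℤ) {ℓ : ℕ} (hℓ : ℓ ≠ 0) (z : ℂ) :
    LSeries ↗(gA d ℓ) z =
      ∏ p ∈ ℓ.primeFactors, (1 + (1 - (kronecker d p : ℂ)) *
        ∑ j ∈ Finset.Icc 1 (ℓ.factorization p), (p : ℂ) ^ (-(j : ℂ) * z)) := by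
  have h1 : LSeries ↗(gA d ℓ) z = ∑ n ∈ ℓ.divisors, gA d ℓ n / (n : ℂ) ^ z := by
    rw [LSeries, tsum_eq_sum (s := ℓ.divisors) ?_]
    · exact Finset.sum_congr rfl fun n hn =>
        LSeries.term_of_ne_zero (Nat.pos_of_mem_divisors hn).ne' _ _
    · intro n hn
      rcases eq_or_ne n 0 with rfl | h0
      · exact LSeries.term_zero _ _
      · rw [LSeries.term_of_ne_zero h0,
          gA_apply_not_dvd d (fun hdvd => hn (Nat.mem_divisors.mpr ⟨hdvd, hℓ⟩)), zero_div]
  set H : ArithmeticFunction ℂ :=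
    ⟨fun n => if n = 0 then 0 else gA d ℓ n / (n : ℂ) ^ z, by simp⟩ with hH
  have hHapp : ∀ {n : ℕ}, n ≠ 0 → H n = gA d ℓ n / (n : ℂ) ^ z := by
    intro n hn; simp [hH, hn]
  have hHmult : H.IsMultiplicative := by
    rw [ArithmeticFunction.IsMultiplicative.iff_ne_zero]
    refine ⟨?_, fun {m n} hm hn hmn => ?_⟩
    · rw [hHapp one_ne_zero, (gA_mult d ℓ).map_one]
      simp
    · rw [hHapp (mul_ne_zero hm hn), hHapp hm, hHapp hn,
        (gA_mult d ℓ).map_mul_of_coprime hmn]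
      have hcast : ((m * n : ℕ) : ℂ) ^ z = (m : ℂ) ^ z * (n : ℂ) ^ z := by
        push_cast
        exact Complex.natCast_mul_natCast_cpow m n z
      rw [hcast, div_mul_div_comm]
  have h2 : ∑ n ∈ ℓ.divisors, gA d ℓ n / (n : ℂ) ^ z = (↑ζ * H) ℓ := by
    rw [ArithmeticFunction.coe_zeta_mul_apply]
    exact Finset.sum_congr rfl fun n hn =>
      (hHapp (Nat.pos_of_mem_divisors hn).ne').symm
  have hζH : (↑ζ * H).IsMultiplicative :=
    (ArithmeticFunction.isMultiplicative_zeta.natCast).mul hHmult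
  rw [h1, h2, ArithmeticFunction.IsMultiplicative.multiplicative_factorization _ hζH hℓ,
    Finsupp.prod]
  rw [Nat.support_factorization]
  refine Finset.prod_congr rfl fun p hp => ?_
  have hpp : p.Prime := Nat.prime_of_mem_primeFactors hp
  set e := ℓ.factorization p with he
  rw [ArithmeticFunction.coe_zeta_mul_apply, Nat.sum_divisors_prime_pow hpp]
  have hsplit : Finset.range (e + 1) = insert 0 (Finset.Icc 1 e) := by
    ext x; simp [Nat.lt_succ_iff]; omega
  rw [hsplit, Finset.sum_insert (by simp)]
  have hH0 : H (p ^ 0) = 1 := by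
    rw [pow_zero, hHapp one_ne_zero, (gA_mult d ℓ).map_one]
    simp
  rw [hH0]
  congr 1
  rw [Finset.mul_sum]
  refine Finset.sum_congr rfl fun j hj => ?_
  obtain ⟨hj1, hje⟩ := Finset.mem_Icc.mp hj
  have hpj : p ^ j ∣ ℓ := (Nat.Prime.pow_dvd_iff_le_factorization hpp hℓ).mpr hje
  have hpjne : p ^ j ≠ 0 := pow_ne_zero _ hpp.pos.ne'
  rw [hHapp hpjne, gA_apply_dvd d hpjne hpj,
    Nat.primeFactors_pow p (by omega : j ≠ 0), hpp.primeFactors, Finset.prod_singleton,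
    div_eq_mul_inv]
  congr 1
  rw [neg_mul, Complex.cpow_neg, Complex.natCast_cpow_natCast_mul]
  norm_cast

end AuxFunctions

/-- Let `D ≠ 0` with `D ≡ 0` or `1 mod 4`, written as `D = d·ℓ²` with
`d` a fundamental discriminant and `ℓ > 0`. Define `ψ_D(n) = (d | n/gcd(n,ℓ))` via the
Kronecker symbol. Then for `Re z > 1`,
`L(z, ψ_D) = L(z, ψ_d) · ∏_{p ∣ ℓ} [1 + (1 - ψ_d(p)) Σ_{j=1}^{ord_p ℓ} p^{-jz}]`. -/
theorem LSeries_psiD_eq (D d : ℤ) (ℓ : ℕ) (hD : D ≠ 0)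
    (hD4 : D % 4 = 0 ∨ D % 4 = 1)
    (hd : IsFundamentalDiscriminant d) (hℓ : 0 < ℓ) (hdec : D = d * (ℓ : ℤ) ^ 2)
    (z : ℂ) (hz : 1 < z.re) :
    LSeries (fun n => (kronecker d (n / n.gcd ℓ) : ℂ)) z =
      LSeries (fun n => (kronecker d n : ℂ)) z *
        ∏ p ∈ ℓ.primeFactors,
          (1 + (1 - (kronecker d p : ℂ)) *
            ∑ j ∈ Finset.Icc 1 (ℓ.factorization p), (p : ℂ) ^ (-(j : ℂ) * z)) := by
  have hℓ0 : ℓ ≠ 0 := hℓ.ne'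
  have e1 : LSeries (fun n => (kronecker d (n / n.gcd ℓ) : ℂ)) z = LSeries ↗(fA d ℓ) z :=
    LSeries_congr (fun {n} hn => (fA_apply d ℓ hn).symm) z
  have e2 : LSeries ↗(psiA d) z = LSeries (fun n => (kronecker d n : ℂ)) z :=
    LSeries_congr (fun {n} hn => psiA_apply d hn) z
  rw [e1, fA_eq d hℓ0, LSeries_mul' (psiA_summable d hz) (gA_summable d hℓ0 z), e2,
    gA_LSeries d hℓ0 z]
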